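/- Let K be a field and S = K[A_1,…,A_7,B_1,…,B_7]. Let S(Θ) be the K-span of the monomials A_1^{u_1}⋯A_7^{u_7}B_1^{v_1}⋯B_7^{v_7} satisfying u_1+u_2 = v_3+v_4, u_2+u_3 = v_2+v_3, u_3+u_4 = v_1+v_2, u_4+u_5 = v_6+v_7, u_5+u_6 = v_5+v_6, u_6+u_7 = v_4+v_5. Let φ be the K-algebra homomorphism from the polynomial ring in 11 variables onto S(Θ) sending the variables to X_1 = A_2B_3, X_2 = A_3B_2, X_3 = A_5B_6, X_4 = A_6B_5, Y_1 = A_1A_7B_4, Y_2 = A_4B_1B_7, Z_1 = A_1A_3B_1B_3, Z_2 = A_5A_7B_5B_7, W_1 = A_1A_4A_6B_1B_4B_6, W_2 = A_2A_4A_6B_2B_4B_6, W_3 = A_2A_4A_7B_2B_4B_7. Then the kernel ideal of φ cannot be generated by fewer than 5 elements; in particular S(Θ) is not a complete intersection. -/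

import Mathlib

open MvPolynomial

/-- The variable `A_i` (1-indexed `i`; here `i : Fin n` is the 0-indexed position). -/
noncomputable def Av (K : Type*) [Field K] (n : ℕ) (i : Fin n) :
    MvPolynomial (Fin n ⊕ Fin n) K := X (Sum.inl i)

/-- The variable `B_i` (1-indexed `i`; here `i : Fin n` is the 0-indexed position). -/
noncomputable def Bv (K : Type*) [Field K] (n : ℕ) (i : Fin n) :
    MvPolynomial (Fin n ⊕ Fin n) K := X (Sum.inr i)

/-- The monomial `A_1^{u 1} ⋯ A_n^{u n} · B_1^{v 1} ⋯ B_n^{v n}` (1-indexed exponents). -/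
noncomputable def monAB (K : Type*) [Field K] (n : ℕ) (u v : ℕ → ℕ) :
    MvPolynomial (Fin n ⊕ Fin n) K :=
  (∏ i : Fin n, X (Sum.inl i) ^ u ((i : ℕ) + 1)) *
    ∏ i : Fin n, X (Sum.inr i) ^ v ((i : ℕ) + 1)

/-- The `K`-span of the monomials whose (1-indexed) exponent vectors satisfy the
control equations `E`; this is the ring `S(Θ)` when `E` is the system of control
equations of a matching `Θ`. -/
noncomputable def controlSpan (K : Type*) [Field K] (n : ℕ)
    (E : (ℕ → ℕ) → (ℕ → ℕ) → Prop) :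
    Submodule K (MvPolynomial (Fin n ⊕ Fin n) K) :=
  Submodule.span K {p | ∃ u v : ℕ → ℕ, E u v ∧ p = monAB K n u v}


namespace S19
set_option maxHeartbeats 1000000

abbrev σ7 := Fin 7 ⊕ Fin 7

noncomputable def sE (s : σ7) : σ7 →₀ ℕ := Finsupp.single s 1
noncomputable def sF (i : Fin 11) : Fin 11 →₀ ℕ := Finsupp.single i 1

noncomputable def mE : Fin 11 → (σ7 →₀ ℕ) := fun i =>
  match i with
  | 0 => sE (.inl 1) + sE (.inr 2)
  | 1 => sE (.inl 2) + sE (.inr 1)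
  | 2 => sE (.inl 4) + sE (.inr 5)
  | 3 => sE (.inl 5) + sE (.inr 4)
  | 4 => sE (.inl 0) + sE (.inl 6) + sE (.inr 3)
  | 5 => sE (.inl 3) + sE (.inr 0) + sE (.inr 6)
  | 6 => sE (.inl 0) + sE (.inl 2) + sE (.inr 0) + sE (.inr 2)
  | 7 => sE (.inl 4) + sE (.inl 6) + sE (.inr 4) + sE (.inr 6)
  | 8 => sE (.inl 0) + sE (.inl 3) + sE (.inl 5) + sE (.inr 0) + sE (.inr 3) + sE (.inr 5)
  | 9 => sE (.inl 1) + sE (.inl 3) + sE (.inl 5) + sE (.inr 1) + sE (.inr 3) + sE (.inr 5)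
  | 10 => sE (.inl 1) + sE (.inl 3) + sE (.inl 6) + sE (.inr 1) + sE (.inr 3) + sE (.inr 6)

noncomputable def Mp (d : Fin 11 →₀ ℕ) : σ7 →₀ ℕ := d.sum fun i k => k • mE i

lemma sum_univ_eleven {M : Type*} [AddCommMonoid M] (f : Fin 11 → M) :
    ∑ i, f i = f 0 + f 1 + f 2 + f 3 + f 4 + f 5 + f 6 + f 7 + f 8 + f 9 + f 10 := by
  rw [Fin.sum_univ_castSucc, Fin.sum_univ_castSucc, Fin.sum_univ_castSucc, Fin.sum_univ_eight]
  rfl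

lemma Mp_apply (d : Fin 11 →₀ ℕ) (s : σ7) :
    Mp d s = d 0 * mE 0 s + d 1 * mE 1 s + d 2 * mE 2 s + d 3 * mE 3 s + d 4 * mE 4 s
      + d 5 * mE 5 s + d 6 * mE 6 s + d 7 * mE 7 s + d 8 * mE 8 s + d 9 * mE 9 s
      + d 10 * mE 10 s := by
  have h1 : Mp d s = ∑ i : Fin 11, d i * mE i s := by
    rw [Mp, Finsupp.sum_apply, Finsupp.sum_fintype]
    · simp
    · intro i; simp
  rw [h1, sum_univ_eleven]

lemma finsupp11_ext {b c : Fin 11 →₀ ℕ} (h0 : b 0 = c 0) (h1 : b 1 = c 1) (h2 : b 2 = c 2)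
    (h3 : b 3 = c 3) (h4 : b 4 = c 4) (h5 : b 5 = c 5) (h6 : b 6 = c 6) (h7 : b 7 = c 7)
    (h8 : b 8 = c 8) (h9 : b 9 = c 9) (h10 : b 10 = c 10) : b = c := by
  ext k; fin_cases k
  exacts [h0, h1, h2, h3, h4, h5, h6, h7, h8, h9, h10]

lemma finsuppS_ext {b c : σ7 →₀ ℕ}
    (a0 : b (Sum.inl 0) = c (Sum.inl 0)) (a1 : b (Sum.inl 1) = c (Sum.inl 1))
    (a2 : b (Sum.inl 2) = c (Sum.inl 2)) (a3 : b (Sum.inl 3) = c (Sum.inl 3))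
    (a4 : b (Sum.inl 4) = c (Sum.inl 4)) (a5 : b (Sum.inl 5) = c (Sum.inl 5))
    (a6 : b (Sum.inl 6) = c (Sum.inl 6))
    (b0 : b (Sum.inr 0) = c (Sum.inr 0)) (b1 : b (Sum.inr 1) = c (Sum.inr 1))
    (b2 : b (Sum.inr 2) = c (Sum.inr 2)) (b3 : b (Sum.inr 3) = c (Sum.inr 3))
    (b4 : b (Sum.inr 4) = c (Sum.inr 4)) (b5 : b (Sum.inr 5) = c (Sum.inr 5))
    (b6 : b (Sum.inr 6) = c (Sum.inr 6)) : b = c := by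
  ext s
  rcases s with a | a <;> fin_cases a
  exacts [a0, a1, a2, a3, a4, a5, a6, b0, b1, b2, b3, b4, b5, b6]

lemma uniq_small (d b : Fin 11 →₀ ℕ) (h0 : b 0 = 0) (h1 : b 1 = 0) (h2 : b 2 = 0)
    (h3 : b 3 = 0) (h4 : b 4 = 0) (h5 : b 5 = 0)
    (hs : b 6 + b 7 + b 8 + b 9 + b 10 ≤ 1) (h : Mp d = Mp b) : d = b := by
  have H := fun s => DFunLike.congr_fun h s
  have A0 := H (Sum.inl 0); have A1 := H (Sum.inl 1); have A2 := H (Sum.inl 2)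
  have A3 := H (Sum.inl 3); have A4 := H (Sum.inl 4); have A5 := H (Sum.inl 5)
  have A6 := H (Sum.inl 6)
  have B0 := H (Sum.inr 0); have B1 := H (Sum.inr 1); have B2 := H (Sum.inr 2)
  have B3 := H (Sum.inr 3); have B4 := H (Sum.inr 4); have B5 := H (Sum.inr 5)
  have B6 := H (Sum.inr 6)
  simp only [Mp_apply] at A0 A1 A2 A3 A4 A5 A6 B0 B1 B2 B3 B4 B5 B6
  simp [mE, sE, Finsupp.single_apply] at A0 A1 A2 A3 A4 A5 A6 B0 B1 B2 B3 B4 B5 B6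
  refine finsupp11_ext ?_ ?_ ?_ ?_ ?_ ?_ ?_ ?_ ?_ ?_ ?_ <;> omega

variable {K : Type*} [Field K]

lemma hX (s : σ7) : (X s : MvPolynomial σ7 K) = monomial (Finsupp.single s 1) 1 := by
  rw [← pow_one (X s), X_pow_eq_monomial]

lemma Mp_add (a b : Fin 11 →₀ ℕ) : Mp (a + b) = Mp a + Mp b := by
  simp only [Mp]
  exact Finsupp.sum_add_index' (fun i => zero_smul _ _) (fun i x y => add_smul x y _)

lemma Mp_single (i : Fin 11) (k : ℕ) : Mp (Finsupp.single i k) = k • mE i := by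
  simp only [Mp]
  exact Finsupp.sum_single_index (zero_smul _ _)

lemma aeval_monomial_f (f : Fin 11 → MvPolynomial σ7 K) (hf : ∀ i, f i = monomial (mE i) 1)
    (d : Fin 11 →₀ ℕ) (c : K) : aeval f (monomial d c) = monomial (Mp d) c := by
  induction d using Finsupp.induction with
  | zero => simp [Mp, monomial_zero', aeval_C, algebraMap_eq]
  | single_add i k d hid hk ih =>
    have h1 : (monomial (Finsupp.single i k + d) c : MvPolynomial (Fin 11) K)
        = monomial (Finsupp.single i k) 1 * monomial d c := by rw [monomial_mul, one_mul]
    rw [h1, map_mul, ih, ← X_pow_eq_monomial, map_pow, aeval_X, hf i, monomial_pow, one_pow,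
      monomial_mul, one_mul, Mp_add, Mp_single]

lemma coeff_ker (f : Fin 11 → MvPolynomial σ7 K) (hf : ∀ i, f i = monomial (mE i) 1)
    {q : MvPolynomial (Fin 11) K} (hq : aeval f q = 0) (ν : Fin 11 →₀ ℕ)
    (huniq : ∀ d : Fin 11 →₀ ℕ, Mp d = Mp ν → d = ν) : coeff ν q = 0 := by
  classical
  have e1 : aeval f q = ∑ d ∈ q.support, monomial (Mp d) (coeff d q) := by
    conv_lhs => rw [q.as_sum]
    rw [map_sum]
    exact Finset.sum_congr rfl fun d _ => aeval_monomial_f f hf d _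
  have e2 := congrArg (coeff (Mp ν)) (e1.symm.trans hq)
  rw [coeff_zero, coeff_sum] at e2
  simp only [coeff_monomial] at e2
  by_cases hmem : ν ∈ q.support
  · rw [Finset.sum_eq_single ν (fun b _ hbne => if_neg fun hc => hbne (huniq b hc))
      (fun h => absurd hmem h), if_pos rfl] at e2
    exact e2
  · exact notMem_support_iff.mp hmem

lemma coeff_mul_ker (f : Fin 11 → MvPolynomial σ7 K) (μ : Fin 11 →₀ ℕ)
    (hsub : ∀ b : Fin 11 →₀ ℕ, b ≤ μ → b ≠ μ → ∀ q : MvPolynomial (Fin 11) K,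
      aeval f q = 0 → coeff b q = 0)
    (r q : MvPolynomial (Fin 11) K) (hq : aeval f q = 0) :
    coeff μ (r * q) = coeff 0 r * coeff μ q := by
  classical
  rw [coeff_mul]
  apply Finset.sum_eq_single_of_mem (0, μ)
  · simp [Finset.mem_antidiagonal]
  · rintro ⟨a, b⟩ hab hne
    rw [Finset.HasAntidiagonal.mem_antidiagonal] at hab
    by_cases ha : a = 0
    · exact (hne (by subst ha; simp_all)).elim
    · have hble : b ≤ μ := hab ▸ le_add_self
      have hbne : b ≠ μ := by
        intro e
        apply ha
        ext s
        have h2 := DFunLike.congr_fun hab s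
        rw [e] at h2
        simp only [Finsupp.add_apply, Finsupp.coe_zero, Pi.zero_apply] at h2 ⊢
        omega
      exact mul_eq_zero_of_right _ (hsub b hble hbne q hq)

-- mu/nu definitions
noncomputable def mu0 : Fin 11 →₀ ℕ := sF 6 + sF 9
noncomputable def mu1 : Fin 11 →₀ ℕ := sF 6 + sF 10
noncomputable def mu2 : Fin 11 →₀ ℕ := sF 7 + sF 8
noncomputable def mu3 : Fin 11 →₀ ℕ := sF 7 + sF 9
noncomputable def mu4 : Fin 11 →₀ ℕ := sF 8 + sF 10
noncomputable def nu0 : Fin 11 →₀ ℕ := sF 0 + sF 1 + sF 8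
noncomputable def nu1 : Fin 11 →₀ ℕ := sF 0 + sF 1 + sF 4 + sF 5
noncomputable def nu2 : Fin 11 →₀ ℕ := sF 2 + sF 3 + sF 4 + sF 5
noncomputable def nu3 : Fin 11 →₀ ℕ := sF 2 + sF 3 + sF 10
noncomputable def nu4 : Fin 11 →₀ ℕ := sF 4 + sF 5 + sF 9

lemma neq_coord {b c : Fin 11 →₀ ℕ} (k : Fin 11) (h : b k ≠ c k) : b ≠ c := fun e => h (by rw [e])

lemma nm01 : mu0 ≠ mu1 := neq_coord 9 (by simp [mu0, mu1, sF, Finsupp.single_apply])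
lemma nm02 : mu0 ≠ mu2 := neq_coord 6 (by simp [mu0, mu2, sF, Finsupp.single_apply])
lemma nm03 : mu0 ≠ mu3 := neq_coord 6 (by simp [mu0, mu3, sF, Finsupp.single_apply])
lemma nm04 : mu0 ≠ mu4 := neq_coord 6 (by simp [mu0, mu4, sF, Finsupp.single_apply])
lemma nm10 : mu1 ≠ mu0 := neq_coord 10 (by simp [mu1, mu0, sF, Finsupp.single_apply])
lemma nm12 : mu1 ≠ mu2 := neq_coord 6 (by simp [mu1, mu2, sF, Finsupp.single_apply])
lemma nm13 : mu1 ≠ mu3 := neq_coord 6 (by simp [mu1, mu3, sF, Finsupp.single_apply])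
lemma nm14 : mu1 ≠ mu4 := neq_coord 6 (by simp [mu1, mu4, sF, Finsupp.single_apply])
lemma nm20 : mu2 ≠ mu0 := neq_coord 7 (by simp [mu2, mu0, sF, Finsupp.single_apply])
lemma nm21 : mu2 ≠ mu1 := neq_coord 7 (by simp [mu2, mu1, sF, Finsupp.single_apply])
lemma nm23 : mu2 ≠ mu3 := neq_coord 8 (by simp [mu2, mu3, sF, Finsupp.single_apply])
lemma nm24 : mu2 ≠ mu4 := neq_coord 7 (by simp [mu2, mu4, sF, Finsupp.single_apply])
lemma nm30 : mu3 ≠ mu0 := neq_coord 7 (by simp [mu3, mu0, sF, Finsupp.single_apply])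
lemma nm31 : mu3 ≠ mu1 := neq_coord 7 (by simp [mu3, mu1, sF, Finsupp.single_apply])
lemma nm32 : mu3 ≠ mu2 := neq_coord 9 (by simp [mu3, mu2, sF, Finsupp.single_apply])
lemma nm34 : mu3 ≠ mu4 := neq_coord 7 (by simp [mu3, mu4, sF, Finsupp.single_apply])
lemma nm40 : mu4 ≠ mu0 := neq_coord 8 (by simp [mu4, mu0, sF, Finsupp.single_apply])
lemma nm41 : mu4 ≠ mu1 := neq_coord 8 (by simp [mu4, mu1, sF, Finsupp.single_apply])
lemma nm42 : mu4 ≠ mu2 := neq_coord 10 (by simp [mu4, mu2, sF, Finsupp.single_apply])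
lemma nm43 : mu4 ≠ mu3 := neq_coord 8 (by simp [mu4, mu3, sF, Finsupp.single_apply])
lemma nv00 : nu0 ≠ mu0 := neq_coord 0 (by simp [nu0, mu0, sF, Finsupp.single_apply])
lemma nv01 : nu0 ≠ mu1 := neq_coord 0 (by simp [nu0, mu1, sF, Finsupp.single_apply])
lemma nv02 : nu0 ≠ mu2 := neq_coord 0 (by simp [nu0, mu2, sF, Finsupp.single_apply])
lemma nv03 : nu0 ≠ mu3 := neq_coord 0 (by simp [nu0, mu3, sF, Finsupp.single_apply])
lemma nv04 : nu0 ≠ mu4 := neq_coord 0 (by simp [nu0, mu4, sF, Finsupp.single_apply])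
lemma nv10 : nu1 ≠ mu0 := neq_coord 0 (by simp [nu1, mu0, sF, Finsupp.single_apply])
lemma nv11 : nu1 ≠ mu1 := neq_coord 0 (by simp [nu1, mu1, sF, Finsupp.single_apply])
lemma nv12 : nu1 ≠ mu2 := neq_coord 0 (by simp [nu1, mu2, sF, Finsupp.single_apply])
lemma nv13 : nu1 ≠ mu3 := neq_coord 0 (by simp [nu1, mu3, sF, Finsupp.single_apply])
lemma nv14 : nu1 ≠ mu4 := neq_coord 0 (by simp [nu1, mu4, sF, Finsupp.single_apply])
lemma nv20 : nu2 ≠ mu0 := neq_coord 2 (by simp [nu2, mu0, sF, Finsupp.single_apply])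
lemma nv21 : nu2 ≠ mu1 := neq_coord 2 (by simp [nu2, mu1, sF, Finsupp.single_apply])
lemma nv22 : nu2 ≠ mu2 := neq_coord 2 (by simp [nu2, mu2, sF, Finsupp.single_apply])
lemma nv23 : nu2 ≠ mu3 := neq_coord 2 (by simp [nu2, mu3, sF, Finsupp.single_apply])
lemma nv24 : nu2 ≠ mu4 := neq_coord 2 (by simp [nu2, mu4, sF, Finsupp.single_apply])
lemma nv30 : nu3 ≠ mu0 := neq_coord 2 (by simp [nu3, mu0, sF, Finsupp.single_apply])
lemma nv31 : nu3 ≠ mu1 := neq_coord 2 (by simp [nu3, mu1, sF, Finsupp.single_apply])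
lemma nv32 : nu3 ≠ mu2 := neq_coord 2 (by simp [nu3, mu2, sF, Finsupp.single_apply])
lemma nv33 : nu3 ≠ mu3 := neq_coord 2 (by simp [nu3, mu3, sF, Finsupp.single_apply])
lemma nv34 : nu3 ≠ mu4 := neq_coord 2 (by simp [nu3, mu4, sF, Finsupp.single_apply])
lemma nv40 : nu4 ≠ mu0 := neq_coord 4 (by simp [nu4, mu0, sF, Finsupp.single_apply])
lemma nv41 : nu4 ≠ mu1 := neq_coord 4 (by simp [nu4, mu1, sF, Finsupp.single_apply])
lemma nv42 : nu4 ≠ mu2 := neq_coord 4 (by simp [nu4, mu2, sF, Finsupp.single_apply])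
lemma nv43 : nu4 ≠ mu3 := neq_coord 4 (by simp [nu4, mu3, sF, Finsupp.single_apply])
lemma nv44 : nu4 ≠ mu4 := neq_coord 4 (by simp [nu4, mu4, sF, Finsupp.single_apply])

variable (K : Type*) [Field K]

noncomputable def pP0 : MvPolynomial (Fin 11) K := monomial mu0 1 - monomial nu0 1
noncomputable def pP1 : MvPolynomial (Fin 11) K := monomial mu1 1 - monomial nu1 1
noncomputable def pP2 : MvPolynomial (Fin 11) K := monomial mu2 1 - monomial nu2 1
noncomputable def pP3 : MvPolynomial (Fin 11) K := monomial mu3 1 - monomial nu3 1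
noncomputable def pP4 : MvPolynomial (Fin 11) K := monomial mu4 1 - monomial nu4 1

lemma Mpmn0 : Mp mu0 = Mp nu0 := by
  refine finsuppS_ext ?_ ?_ ?_ ?_ ?_ ?_ ?_ ?_ ?_ ?_ ?_ ?_ ?_ ?_ <;>
    · rw [Mp_apply, Mp_apply]; simp [mu0, nu0, sF, mE, sE, Finsupp.single_apply]
lemma Mpmn1 : Mp mu1 = Mp nu1 := by
  refine finsuppS_ext ?_ ?_ ?_ ?_ ?_ ?_ ?_ ?_ ?_ ?_ ?_ ?_ ?_ ?_ <;>
    · rw [Mp_apply, Mp_apply]; simp [mu1, nu1, sF, mE, sE, Finsupp.single_apply]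
lemma Mpmn2 : Mp mu2 = Mp nu2 := by
  refine finsuppS_ext ?_ ?_ ?_ ?_ ?_ ?_ ?_ ?_ ?_ ?_ ?_ ?_ ?_ ?_ <;>
    · rw [Mp_apply, Mp_apply]; simp [mu2, nu2, sF, mE, sE, Finsupp.single_apply]
lemma Mpmn3 : Mp mu3 = Mp nu3 := by
  refine finsuppS_ext ?_ ?_ ?_ ?_ ?_ ?_ ?_ ?_ ?_ ?_ ?_ ?_ ?_ ?_ <;>
    · rw [Mp_apply, Mp_apply]; simp [mu3, nu3, sF, mE, sE, Finsupp.single_apply]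
lemma Mpmn4 : Mp mu4 = Mp nu4 := by
  refine finsuppS_ext ?_ ?_ ?_ ?_ ?_ ?_ ?_ ?_ ?_ ?_ ?_ ?_ ?_ ?_ <;>
    · rw [Mp_apply, Mp_apply]; simp [mu4, nu4, sF, mE, sE, Finsupp.single_apply]

variable {K}

lemma aeval_p0 (f : Fin 11 → MvPolynomial σ7 K) (hf : ∀ i, f i = monomial (mE i) 1) : aeval f (pP0 K) = 0 := by
  rw [pP0, map_sub, aeval_monomial_f f hf, aeval_monomial_f f hf, Mpmn0, sub_self]
lemma aeval_p1 (f : Fin 11 → MvPolynomial σ7 K) (hf : ∀ i, f i = monomial (mE i) 1) : aeval f (pP1 K) = 0 := by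
  rw [pP1, map_sub, aeval_monomial_f f hf, aeval_monomial_f f hf, Mpmn1, sub_self]
lemma aeval_p2 (f : Fin 11 → MvPolynomial σ7 K) (hf : ∀ i, f i = monomial (mE i) 1) : aeval f (pP2 K) = 0 := by
  rw [pP2, map_sub, aeval_monomial_f f hf, aeval_monomial_f f hf, Mpmn2, sub_self]
lemma aeval_p3 (f : Fin 11 → MvPolynomial σ7 K) (hf : ∀ i, f i = monomial (mE i) 1) : aeval f (pP3 K) = 0 := by
  rw [pP3, map_sub, aeval_monomial_f f hf, aeval_monomial_f f hf, Mpmn3, sub_self]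
lemma aeval_p4 (f : Fin 11 → MvPolynomial σ7 K) (hf : ∀ i, f i = monomial (mE i) 1) : aeval f (pP4 K) = 0 := by
  rw [pP4, map_sub, aeval_monomial_f f hf, aeval_monomial_f f hf, Mpmn4, sub_self]

lemma hsub0 (f : Fin 11 → MvPolynomial σ7 K) (hf : ∀ i, f i = monomial (mE i) 1) : ∀ b : Fin 11 →₀ ℕ, b ≤ mu0 → b ≠ mu0 → ∀ q : MvPolynomial (Fin 11) K,
    aeval f q = 0 → coeff b q = 0 := by
  intro b hble hbne q hq
  have hb := fun k => Finsupp.le_def.mp hble k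
  have c0 := hb 0; have c1 := hb 1; have c2 := hb 2; have c3 := hb 3; have c4 := hb 4
  have c5 := hb 5; have c6 := hb 6; have c7 := hb 7; have c8 := hb 8; have c9 := hb 9
  have c10 := hb 10
  simp [mu0, sF, Finsupp.single_apply] at c0 c1 c2 c3 c4 c5 c6 c7 c8 c9 c10
  have hne : ¬(b 6 = 1 ∧ b 9 = 1) := by
    rintro ⟨e1, e2⟩
    refine hbne (finsupp11_ext ?_ ?_ ?_ ?_ ?_ ?_ ?_ ?_ ?_ ?_ ?_) <;>
      simp [mu0, sF, Finsupp.single_apply] <;> omega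
  refine coeff_ker f hf hq b (fun d hd => uniq_small d b ?_ ?_ ?_ ?_ ?_ ?_ ?_ hd) <;> omega
lemma hsub1 (f : Fin 11 → MvPolynomial σ7 K) (hf : ∀ i, f i = monomial (mE i) 1) : ∀ b : Fin 11 →₀ ℕ, b ≤ mu1 → b ≠ mu1 → ∀ q : MvPolynomial (Fin 11) K,
    aeval f q = 0 → coeff b q = 0 := by
  intro b hble hbne q hq
  have hb := fun k => Finsupp.le_def.mp hble k
  have c0 := hb 0; have c1 := hb 1; have c2 := hb 2; have c3 := hb 3; have c4 := hb 4
  have c5 := hb 5; have c6 := hb 6; have c7 := hb 7; have c8 := hb 8; have c9 := hb 9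
  have c10 := hb 10
  simp [mu1, sF, Finsupp.single_apply] at c0 c1 c2 c3 c4 c5 c6 c7 c8 c9 c10
  have hne : ¬(b 6 = 1 ∧ b 10 = 1) := by
    rintro ⟨e1, e2⟩
    refine hbne (finsupp11_ext ?_ ?_ ?_ ?_ ?_ ?_ ?_ ?_ ?_ ?_ ?_) <;>
      simp [mu1, sF, Finsupp.single_apply] <;> omega
  refine coeff_ker f hf hq b (fun d hd => uniq_small d b ?_ ?_ ?_ ?_ ?_ ?_ ?_ hd) <;> omega
lemma hsub2 (f : Fin 11 → MvPolynomial σ7 K) (hf : ∀ i, f i = monomial (mE i) 1) : ∀ b : Fin 11 →₀ ℕ, b ≤ mu2 → b ≠ mu2 → ∀ q : MvPolynomial (Fin 11) K,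
    aeval f q = 0 → coeff b q = 0 := by
  intro b hble hbne q hq
  have hb := fun k => Finsupp.le_def.mp hble k
  have c0 := hb 0; have c1 := hb 1; have c2 := hb 2; have c3 := hb 3; have c4 := hb 4
  have c5 := hb 5; have c6 := hb 6; have c7 := hb 7; have c8 := hb 8; have c9 := hb 9
  have c10 := hb 10
  simp [mu2, sF, Finsupp.single_apply] at c0 c1 c2 c3 c4 c5 c6 c7 c8 c9 c10
  have hne : ¬(b 7 = 1 ∧ b 8 = 1) := by
    rintro ⟨e1, e2⟩
    refine hbne (finsupp11_ext ?_ ?_ ?_ ?_ ?_ ?_ ?_ ?_ ?_ ?_ ?_) <;>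
      simp [mu2, sF, Finsupp.single_apply] <;> omega
  refine coeff_ker f hf hq b (fun d hd => uniq_small d b ?_ ?_ ?_ ?_ ?_ ?_ ?_ hd) <;> omega
lemma hsub3 (f : Fin 11 → MvPolynomial σ7 K) (hf : ∀ i, f i = monomial (mE i) 1) : ∀ b : Fin 11 →₀ ℕ, b ≤ mu3 → b ≠ mu3 → ∀ q : MvPolynomial (Fin 11) K,
    aeval f q = 0 → coeff b q = 0 := by
  intro b hble hbne q hq
  have hb := fun k => Finsupp.le_def.mp hble k
  have c0 := hb 0; have c1 := hb 1; have c2 := hb 2; have c3 := hb 3; have c4 := hb 4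
  have c5 := hb 5; have c6 := hb 6; have c7 := hb 7; have c8 := hb 8; have c9 := hb 9
  have c10 := hb 10
  simp [mu3, sF, Finsupp.single_apply] at c0 c1 c2 c3 c4 c5 c6 c7 c8 c9 c10
  have hne : ¬(b 7 = 1 ∧ b 9 = 1) := by
    rintro ⟨e1, e2⟩
    refine hbne (finsupp11_ext ?_ ?_ ?_ ?_ ?_ ?_ ?_ ?_ ?_ ?_ ?_) <;>
      simp [mu3, sF, Finsupp.single_apply] <;> omega
  refine coeff_ker f hf hq b (fun d hd => uniq_small d b ?_ ?_ ?_ ?_ ?_ ?_ ?_ hd) <;> omega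
lemma hsub4 (f : Fin 11 → MvPolynomial σ7 K) (hf : ∀ i, f i = monomial (mE i) 1) : ∀ b : Fin 11 →₀ ℕ, b ≤ mu4 → b ≠ mu4 → ∀ q : MvPolynomial (Fin 11) K,
    aeval f q = 0 → coeff b q = 0 := by
  intro b hble hbne q hq
  have hb := fun k => Finsupp.le_def.mp hble k
  have c0 := hb 0; have c1 := hb 1; have c2 := hb 2; have c3 := hb 3; have c4 := hb 4
  have c5 := hb 5; have c6 := hb 6; have c7 := hb 7; have c8 := hb 8; have c9 := hb 9
  have c10 := hb 10
  simp [mu4, sF, Finsupp.single_apply] at c0 c1 c2 c3 c4 c5 c6 c7 c8 c9 c10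
  have hne : ¬(b 8 = 1 ∧ b 10 = 1) := by
    rintro ⟨e1, e2⟩
    refine hbne (finsupp11_ext ?_ ?_ ?_ ?_ ?_ ?_ ?_ ?_ ?_ ?_ ?_) <;>
      simp [mu4, sF, Finsupp.single_apply] <;> omega
  refine coeff_ker f hf hq b (fun d hd => uniq_small d b ?_ ?_ ?_ ?_ ?_ ?_ ?_ hd) <;> omega

noncomputable def muv : Fin 5 → (Fin 11 →₀ ℕ) := ![mu0, mu1, mu2, mu3, mu4]
noncomputable def Tmap (K : Type*) [Field K] : MvPolynomial (Fin 11) K →ₗ[K] (Fin 5 → K) :=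
  LinearMap.pi fun j => lcoeff K (muv j)

lemma hTp0 : Tmap K (pP0 K) = Pi.single (0 : Fin 5) (1 : K) := by
  funext j
  fin_cases j
  · show coeff mu0 (pP0 K) = (Pi.single (0 : Fin 5) (1:K) : Fin 5 → K) 0
    simp [pP0, coeff_sub, coeff_monomial, nv00, Pi.single_apply]
  · show coeff mu1 (pP0 K) = (Pi.single (0 : Fin 5) (1:K) : Fin 5 → K) 1
    simp [pP0, coeff_sub, coeff_monomial, nm01, nv01, Pi.single_apply]
  · show coeff mu2 (pP0 K) = (Pi.single (0 : Fin 5) (1:K) : Fin 5 → K) 2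
    simp [pP0, coeff_sub, coeff_monomial, nm02, nv02, Pi.single_apply]
  · show coeff mu3 (pP0 K) = (Pi.single (0 : Fin 5) (1:K) : Fin 5 → K) 3
    simp [pP0, coeff_sub, coeff_monomial, nm03, nv03, Pi.single_apply]
  · show coeff mu4 (pP0 K) = (Pi.single (0 : Fin 5) (1:K) : Fin 5 → K) 4
    simp [pP0, coeff_sub, coeff_monomial, nm04, nv04, Pi.single_apply]
lemma hTp1 : Tmap K (pP1 K) = Pi.single (1 : Fin 5) (1 : K) := by
  funext j
  fin_cases j
  · show coeff mu0 (pP1 K) = (Pi.single (1 : Fin 5) (1:K) : Fin 5 → K) 0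
    simp [pP1, coeff_sub, coeff_monomial, nm10, nv10, Pi.single_apply]
  · show coeff mu1 (pP1 K) = (Pi.single (1 : Fin 5) (1:K) : Fin 5 → K) 1
    simp [pP1, coeff_sub, coeff_monomial, nv11, Pi.single_apply]
  · show coeff mu2 (pP1 K) = (Pi.single (1 : Fin 5) (1:K) : Fin 5 → K) 2
    simp [pP1, coeff_sub, coeff_monomial, nm12, nv12, Pi.single_apply]
  · show coeff mu3 (pP1 K) = (Pi.single (1 : Fin 5) (1:K) : Fin 5 → K) 3
    simp [pP1, coeff_sub, coeff_monomial, nm13, nv13, Pi.single_apply]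
  · show coeff mu4 (pP1 K) = (Pi.single (1 : Fin 5) (1:K) : Fin 5 → K) 4
    simp [pP1, coeff_sub, coeff_monomial, nm14, nv14, Pi.single_apply]
lemma hTp2 : Tmap K (pP2 K) = Pi.single (2 : Fin 5) (1 : K) := by
  funext j
  fin_cases j
  · show coeff mu0 (pP2 K) = (Pi.single (2 : Fin 5) (1:K) : Fin 5 → K) 0
    simp [pP2, coeff_sub, coeff_monomial, nm20, nv20, Pi.single_apply]
  · show coeff mu1 (pP2 K) = (Pi.single (2 : Fin 5) (1:K) : Fin 5 → K) 1
    simp [pP2, coeff_sub, coeff_monomial, nm21, nv21, Pi.single_apply]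
  · show coeff mu2 (pP2 K) = (Pi.single (2 : Fin 5) (1:K) : Fin 5 → K) 2
    simp [pP2, coeff_sub, coeff_monomial, nv22, Pi.single_apply]
  · show coeff mu3 (pP2 K) = (Pi.single (2 : Fin 5) (1:K) : Fin 5 → K) 3
    simp [pP2, coeff_sub, coeff_monomial, nm23, nv23, Pi.single_apply]
  · show coeff mu4 (pP2 K) = (Pi.single (2 : Fin 5) (1:K) : Fin 5 → K) 4
    simp [pP2, coeff_sub, coeff_monomial, nm24, nv24, Pi.single_apply]
lemma hTp3 : Tmap K (pP3 K) = Pi.single (3 : Fin 5) (1 : K) := by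
  funext j
  fin_cases j
  · show coeff mu0 (pP3 K) = (Pi.single (3 : Fin 5) (1:K) : Fin 5 → K) 0
    simp [pP3, coeff_sub, coeff_monomial, nm30, nv30, Pi.single_apply]
  · show coeff mu1 (pP3 K) = (Pi.single (3 : Fin 5) (1:K) : Fin 5 → K) 1
    simp [pP3, coeff_sub, coeff_monomial, nm31, nv31, Pi.single_apply]
  · show coeff mu2 (pP3 K) = (Pi.single (3 : Fin 5) (1:K) : Fin 5 → K) 2
    simp [pP3, coeff_sub, coeff_monomial, nm32, nv32, Pi.single_apply]
  · show coeff mu3 (pP3 K) = (Pi.single (3 : Fin 5) (1:K) : Fin 5 → K) 3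
    simp [pP3, coeff_sub, coeff_monomial, nv33, Pi.single_apply]
  · show coeff mu4 (pP3 K) = (Pi.single (3 : Fin 5) (1:K) : Fin 5 → K) 4
    simp [pP3, coeff_sub, coeff_monomial, nm34, nv34, Pi.single_apply]
lemma hTp4 : Tmap K (pP4 K) = Pi.single (4 : Fin 5) (1 : K) := by
  funext j
  fin_cases j
  · show coeff mu0 (pP4 K) = (Pi.single (4 : Fin 5) (1:K) : Fin 5 → K) 0
    simp [pP4, coeff_sub, coeff_monomial, nm40, nv40, Pi.single_apply]
  · show coeff mu1 (pP4 K) = (Pi.single (4 : Fin 5) (1:K) : Fin 5 → K) 1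
    simp [pP4, coeff_sub, coeff_monomial, nm41, nv41, Pi.single_apply]
  · show coeff mu2 (pP4 K) = (Pi.single (4 : Fin 5) (1:K) : Fin 5 → K) 2
    simp [pP4, coeff_sub, coeff_monomial, nm42, nv42, Pi.single_apply]
  · show coeff mu3 (pP4 K) = (Pi.single (4 : Fin 5) (1:K) : Fin 5 → K) 3
    simp [pP4, coeff_sub, coeff_monomial, nm43, nv43, Pi.single_apply]
  · show coeff mu4 (pP4 K) = (Pi.single (4 : Fin 5) (1:K) : Fin 5 → K) 4
    simp [pP4, coeff_sub, coeff_monomial, nv44, Pi.single_apply]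

lemma hf0 (K : Type*) [Field K] : Av K 7 1 * Bv K 7 2 = monomial (mE 0) (1:K) := by
  simp [Av, Bv, hX, mE, sE, monomial_mul]
lemma hf1 (K : Type*) [Field K] : Av K 7 2 * Bv K 7 1 = monomial (mE 1) (1:K) := by
  simp [Av, Bv, hX, mE, sE, monomial_mul]
lemma hf2 (K : Type*) [Field K] : Av K 7 4 * Bv K 7 5 = monomial (mE 2) (1:K) := by
  simp [Av, Bv, hX, mE, sE, monomial_mul]
lemma hf3 (K : Type*) [Field K] : Av K 7 5 * Bv K 7 4 = monomial (mE 3) (1:K) := by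
  simp [Av, Bv, hX, mE, sE, monomial_mul]
lemma hf4 (K : Type*) [Field K] : Av K 7 0 * Av K 7 6 * Bv K 7 3 = monomial (mE 4) (1:K) := by
  simp [Av, Bv, hX, mE, sE, monomial_mul]
lemma hf5 (K : Type*) [Field K] : Av K 7 3 * Bv K 7 0 * Bv K 7 6 = monomial (mE 5) (1:K) := by
  simp [Av, Bv, hX, mE, sE, monomial_mul]
lemma hf6 (K : Type*) [Field K] : Av K 7 0 * Av K 7 2 * Bv K 7 0 * Bv K 7 2 = monomial (mE 6) (1:K) := by
  simp [Av, Bv, hX, mE, sE, monomial_mul]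
lemma hf7 (K : Type*) [Field K] : Av K 7 4 * Av K 7 6 * Bv K 7 4 * Bv K 7 6 = monomial (mE 7) (1:K) := by
  simp [Av, Bv, hX, mE, sE, monomial_mul]
lemma hf8 (K : Type*) [Field K] : Av K 7 0 * Av K 7 3 * Av K 7 5 * Bv K 7 0 * Bv K 7 3 * Bv K 7 5 = monomial (mE 8) (1:K) := by
  simp [Av, Bv, hX, mE, sE, monomial_mul]
lemma hf9 (K : Type*) [Field K] : Av K 7 1 * Av K 7 3 * Av K 7 5 * Bv K 7 1 * Bv K 7 3 * Bv K 7 5 = monomial (mE 9) (1:K) := by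
  simp [Av, Bv, hX, mE, sE, monomial_mul]
lemma hf10 (K : Type*) [Field K] : Av K 7 1 * Av K 7 3 * Av K 7 6 * Bv K 7 1 * Bv K 7 3 * Bv K 7 6 = monomial (mE 10) (1:K) := by
  simp [Av, Bv, hX, mE, sE, monomial_mul]

end S19

open S19 in
/-- For `n = 7` and the matching `Θ(x_1)=y_3, Θ(x_2)=y_2, Θ(x_3)=y_1, Θ(x_4)=y_6,
Θ(x_5)=y_5, Θ(x_6)=y_4`, let `φ` be the presentation of `S(Θ)` on the eleven
generators `X_1, X_2, X_3, X_4, Y_1, Y_2, Z_1, Z_2, W_1, W_2, W_3` (in this order).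
Then the kernel of `φ` cannot be generated by fewer than 5 elements; in particular
`S(Θ)` is not a complete intersection. -/
theorem stmt19 (K : Type*) [Field K]
    (G : Finset (MvPolynomial (Fin 11) K))
    (hG : Ideal.span (G : Set (MvPolynomial (Fin 11) K)) =
      RingHom.ker
        (aeval (R := K)
          ![Av K 7 1 * Bv K 7 2, Av K 7 2 * Bv K 7 1,
            Av K 7 4 * Bv K 7 5, Av K 7 5 * Bv K 7 4,
            Av K 7 0 * Av K 7 6 * Bv K 7 3, Av K 7 3 * Bv K 7 0 * Bv K 7 6,
            Av K 7 0 * Av K 7 2 * Bv K 7 0 * Bv K 7 2,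
            Av K 7 4 * Av K 7 6 * Bv K 7 4 * Bv K 7 6,
            Av K 7 0 * Av K 7 3 * Av K 7 5 * Bv K 7 0 * Bv K 7 3 * Bv K 7 5,
            Av K 7 1 * Av K 7 3 * Av K 7 5 * Bv K 7 1 * Bv K 7 3 * Bv K 7 5,
            Av K 7 1 * Av K 7 3 * Av K 7 6 * Bv K 7 1 * Bv K 7 3 * Bv K 7 6] :
          MvPolynomial (Fin 11) K →ₐ[K] MvPolynomial (Fin 7 ⊕ Fin 7) K)) :
    5 ≤ G.card := by
  classical
  set Fv : Fin 11 → MvPolynomial (Fin 7 ⊕ Fin 7) K :=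
    ![Av K 7 1 * Bv K 7 2, Av K 7 2 * Bv K 7 1,
      Av K 7 4 * Bv K 7 5, Av K 7 5 * Bv K 7 4,
      Av K 7 0 * Av K 7 6 * Bv K 7 3, Av K 7 3 * Bv K 7 0 * Bv K 7 6,
      Av K 7 0 * Av K 7 2 * Bv K 7 0 * Bv K 7 2,
      Av K 7 4 * Av K 7 6 * Bv K 7 4 * Bv K 7 6,
      Av K 7 0 * Av K 7 3 * Av K 7 5 * Bv K 7 0 * Bv K 7 3 * Bv K 7 5,
      Av K 7 1 * Av K 7 3 * Av K 7 5 * Bv K 7 1 * Bv K 7 3 * Bv K 7 5,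
      Av K 7 1 * Av K 7 3 * Av K 7 6 * Bv K 7 1 * Bv K 7 3 * Bv K 7 6] with hFv
  have hf : ∀ i, Fv i = monomial (mE i) 1 := by
    intro i; fin_cases i
    exacts [hf0 K, hf1 K, hf2 K, hf3 K, hf4 K, hf5 K, hf6 K, hf7 K, hf8 K, hf9 K, hf10 K]
  have hker : ∀ {q : MvPolynomial (Fin 11) K},
      q ∈ Ideal.span (G : Set (MvPolynomial (Fin 11) K)) → aeval Fv q = 0 := by
    intro q hq
    rw [hG] at hq
    exact RingHom.mem_ker.mp hq
  have hmemker : ∀ (p : MvPolynomial (Fin 11) K), aeval Fv p = 0 →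
      p ∈ Ideal.span (G : Set (MvPolynomial (Fin 11) K)) := by
    intro p hp
    rw [hG]
    exact RingHom.mem_ker.mpr hp
  have hTspan : ∀ p ∈ Ideal.span (G : Set (MvPolynomial (Fin 11) K)),
      Tmap K p ∈ Submodule.span K (Tmap K '' (G : Set (MvPolynomial (Fin 11) K))) := by
    intro p hp
    induction hp using Submodule.span_induction with
    | mem x hx => exact Submodule.subset_span ⟨x, hx, rfl⟩
    | zero => rw [map_zero]; exact Submodule.zero_mem _
    | add x y hx hy ihx ihy => rw [map_add]; exact Submodule.add_mem _ ihx ihy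
    | smul r x hx ih =>
      have hx0 : aeval Fv x = 0 := hker hx
      have h3 : ∀ jj : Fin 5, coeff (muv jj) (r * x) = coeff 0 r * coeff (muv jj) x := by
        intro jj; fin_cases jj
        exacts [coeff_mul_ker Fv mu0 (hsub0 Fv hf) r x hx0,
          coeff_mul_ker Fv mu1 (hsub1 Fv hf) r x hx0,
          coeff_mul_ker Fv mu2 (hsub2 Fv hf) r x hx0,
          coeff_mul_ker Fv mu3 (hsub3 Fv hf) r x hx0,
          coeff_mul_ker Fv mu4 (hsub4 Fv hf) r x hx0]
      have h2 : Tmap K (r • x) = coeff 0 r • Tmap K x := by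
        funext j
        show coeff (muv j) (r • x) = coeff 0 r • (Tmap K x) j
        rw [smul_eq_mul, smul_eq_mul]
        exact h3 j
      rw [h2]
      exact Submodule.smul_mem _ _ ih
  have hv : ∀ i : Fin 5, Tmap K ((![pP0 K, pP1 K, pP2 K, pP3 K, pP4 K] : Fin 5 → _) i)
      = Pi.single i (1 : K) := by
    intro i; fin_cases i
    exacts [hTp0, hTp1, hTp2, hTp3, hTp4]
  have hvmem : ∀ i : Fin 5, (![pP0 K, pP1 K, pP2 K, pP3 K, pP4 K] : Fin 5 → _) i
      ∈ Ideal.span (G : Set (MvPolynomial (Fin 11) K)) := by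
    intro i; fin_cases i
    exacts [hmemker _ (aeval_p0 Fv hf), hmemker _ (aeval_p1 Fv hf),
      hmemker _ (aeval_p2 Fv hf), hmemker _ (aeval_p3 Fv hf), hmemker _ (aeval_p4 Fv hf)]
  have hsingle : ∀ i : Fin 5, Pi.single i (1 : K)
      ∈ Submodule.span K (Tmap K '' (G : Set (MvPolynomial (Fin 11) K))) := by
    intro i
    have := hTspan _ (hvmem i)
    rwa [hv i] at this
  have htop : Submodule.span K (Tmap K '' (G : Set (MvPolynomial (Fin 11) K))) = ⊤ := by
    rw [eq_top_iff]
    intro x _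
    have hx : x = ∑ i : Fin 5, x i • (Pi.single i (1 : K) : Fin 5 → K) := by
      funext j
      rw [Finset.sum_apply]
      simp [Pi.single_apply]
    rw [hx]
    exact Submodule.sum_mem _ fun i _ => Submodule.smul_mem _ _ (hsingle i)
  have hcalc : (5 : ℕ) ≤ (G.image (Tmap K)).card := by
    have h5 : Module.finrank K (Fin 5 → K) = 5 := by simp [Module.finrank_pi]
    calc (5 : ℕ) = Module.finrank K (Fin 5 → K) := h5.symm
      _ = Module.finrank K (Submodule.span K
            ((G.image (Tmap K) : Finset (Fin 5 → K)) : Set (Fin 5 → K))) := by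
          rw [Finset.coe_image, htop]
          exact (finrank_top K _).symm
      _ ≤ (G.image (Tmap K)).card := finrank_span_finset_le_card _
  exact le_trans hcalc Finset.card_image_le
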